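/- arXiv:2410.18049 — 5 statements merged into one kernel-verified Lean document; each statement's English description precedes it below -/
import Mathlib

section
/- Let p : E → B be a fibration of groupoids and B an object of B. Under the action of Aut_B(B) on π₀(Fib(p,B)) given by lifting morphisms, the stabiliser of the class [A] of an object A in the fibre is exactly the image p_*(Aut_E(A)) of the automorphism group of A in E. -/
open CategoryTheory

universe u u'

variable {E : Type u} [Groupoid E] {B : Type u'} [Groupoid B]

/-- A fibration of groupoids: every morphism of the base with target `p.obj e`
lifts to a morphism of the total groupoid with target `e`. -/
def IsGrpdFibration (p : E ⥤ B) : Prop :=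
  ∀ (e : E) (b' : B) (h : b' ⟶ p.obj e),
    ∃ (e' : E) (g : e' ⟶ e) (he : p.obj e' = b'), p.map g = eqToHom he ≫ h

/-- The fibre of a functor of groupoids at an object of the base. -/
structure Fib (p : E ⥤ B) (b : B) where
  pt : E
  over' : p.obj pt = b

/-- The fibre is a groupoid: morphisms are the morphisms of `E` mapping to the identity. -/
instance fibGroupoid (p : E ⥤ B) (b : B) : Groupoid (Fib p b) where
  Hom a a' := {f : a.pt ⟶ a'.pt // p.map f = eqToHom (a.over'.trans a'.over'.symm)}
  id a := ⟨𝟙 a.pt, by simp⟩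
  comp f g := ⟨f.1 ≫ g.1, by rw [Functor.map_comp, f.2, g.2, eqToHom_trans]⟩
  id_comp f := Subtype.ext (Category.id_comp f.1)
  comp_id f := Subtype.ext (Category.comp_id f.1)
  assoc f g h := Subtype.ext (Category.assoc f.1 g.1 h.1)
  inv f := ⟨Groupoid.inv f.1, by
    rw [Groupoid.inv_eq_inv, Functor.map_inv]
    exact IsIso.inv_eq_of_hom_inv_id (by rw [f.2, eqToHom_trans, eqToHom_refl])⟩
  inv_comp f := Subtype.ext (Groupoid.inv_comp f.1)
  comp_inv f := Subtype.ext (Groupoid.comp_inv f.1)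

/-- For a fibration of groupoids and the lifting action of `Aut_B(b)` on `π₀(Fib(p,b))`,
the stabiliser of the class of an object `A` of the fibre is exactly the image
`p_*(Aut_E(A))` of the automorphism group of `A` in `E`. -/
theorem stabilizer_eq_image_aut (p : E ⥤ B) (hp : IsGrpdFibration p) (b : B)
    (act : MulAction (Aut b) (Quotient (isIsomorphicSetoid (Fib p b))))
    (hact : ∀ (g : Aut b) (X Xg : Fib p b) (glift : Xg.pt ⟶ X.pt),
        p.map glift = eqToHom Xg.over' ≫ g.hom ≫ eqToHom X.over'.symm →
        act.smul g (Quotient.mk (isIsomorphicSetoid (Fib p b)) X)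
          = Quotient.mk (isIsomorphicSetoid (Fib p b)) Xg)
    (A : Fib p b) :
    {g : Aut b | act.smul g (Quotient.mk (isIsomorphicSetoid (Fib p b)) A)
        = Quotient.mk (isIsomorphicSetoid (Fib p b)) A}
      = {g : Aut b | ∃ f : A.pt ⟶ A.pt,
          p.map f = eqToHom A.over' ≫ g.hom ≫ eqToHom A.over'.symm} := by
  ext g
  constructor
  · intro hg
    -- lift g against A
    obtain ⟨e', glift, he, hmap⟩ := hp A.pt b (g.hom ≫ eqToHom A.over'.symm)
    set Xg : Fib p b := ⟨e', he⟩
    have h1 : act.smul g (Quotient.mk (isIsomorphicSetoid (Fib p b)) A)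
        = Quotient.mk (isIsomorphicSetoid (Fib p b)) Xg := by
      apply hact g A Xg glift
      simpa using hmap
    have h2 : Quotient.mk (isIsomorphicSetoid (Fib p b)) Xg
        = Quotient.mk (isIsomorphicSetoid (Fib p b)) A := h1.symm.trans hg
    obtain ⟨j⟩ := Quotient.exact h2
    refine ⟨Groupoid.inv j.hom.1 ≫ glift, ?_⟩
    rw [Functor.map_comp]
    have hj : p.map j.hom.1 = eqToHom (Xg.over'.trans A.over'.symm) := j.hom.2
    have : p.map (Groupoid.inv j.hom.1) = eqToHom (A.over'.trans Xg.over'.symm) := by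
      rw [Groupoid.inv_eq_inv, Functor.map_inv]
      simp [hj]
    rw [this, hmap, ← Category.assoc, eqToHom_trans]
  · rintro ⟨f, hf⟩
    exact hact g A A f hf
end

section
/- Let p : E → B be a fibration of groupoids, B an object of B, and R(B) a set of representatives of the isomorphism classes of objects of B. Then there is a bijection ∐_{B ∈ R(B)} π₀(Fib(p,B))/Aut_B(B) → π₀(E) sending the orbit of [A]_{Fib(p,B)} to the class [A]_E. -/
open CategoryTheory

universe u u'

variable {E : Type u} [Groupoid E] {B : Type u'} [Groupoid B]

/-- For a fibration of groupoids `p : E → B` and a set `R` of representatives of the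
isomorphism classes of `B`, there is a bijection
`∐_{b ∈ R} π₀(Fib(p,b))/Aut_B(b) → π₀(E)` sending the orbit of `[A]` in `π₀(Fib(p,b))`
to the class `[A]` in `π₀(E)`. -/
theorem pi0_total_as_coproduct_of_orbit_quotients (p : E ⥤ B) (hp : IsGrpdFibration p)
    (R : Set B) (hR : ∀ b : B, ∃! r : B, r ∈ R ∧ Nonempty (b ≅ r))
    (act : ∀ b : B, MulAction (Aut b) (Quotient (isIsomorphicSetoid (Fib p b))))
    (hact : ∀ (b : B) (g : Aut b) (X Xg : Fib p b) (glift : Xg.pt ⟶ X.pt),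
        p.map glift = eqToHom Xg.over' ≫ g.hom ≫ eqToHom X.over'.symm →
        (act b).smul g (Quotient.mk (isIsomorphicSetoid (Fib p b)) X)
          = Quotient.mk (isIsomorphicSetoid (Fib p b)) Xg) :
    ∃ Φ : (Σ b : R, Quotient (@MulAction.orbitRel (Aut b.1)
            (Quotient (isIsomorphicSetoid (Fib p b.1))) _ (act b.1)))
          ≃ Quotient (isIsomorphicSetoid E),
      ∀ (b : R) (A : Fib p b.1),
        Φ ⟨b, Quotient.mk (@MulAction.orbitRel (Aut b.1)
            (Quotient (isIsomorphicSetoid (Fib p b.1))) _ (act b.1))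
            (Quotient.mk (isIsomorphicSetoid (Fib p b.1)) A)⟩
          = Quotient.mk (isIsomorphicSetoid E) A.pt := by
  classical
  have f₀respects : ∀ (b : B) (A A' : Fib p b), IsIsomorphic A A' →
      Quotient.mk (isIsomorphicSetoid E) A.pt = Quotient.mk (isIsomorphicSetoid E) A'.pt := by
    rintro b A A' ⟨e⟩
    exact Quotient.sound ⟨(Groupoid.isoEquivHom _ _).symm e.hom.1⟩
  let f₀ : ∀ b : B, Quotient (isIsomorphicSetoid (Fib p b)) → Quotient (isIsomorphicSetoid E) :=
    fun b => Quotient.lift (fun A => Quotient.mk (isIsomorphicSetoid E) A.pt) (f₀respects b)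
  -- acting by `g` does not change the connected component in `E`
  have key : ∀ (b : B) (g : Aut b) (X : Fib p b),
      ∃ Xg : Fib p b, (act b).smul g (Quotient.mk (isIsomorphicSetoid (Fib p b)) X)
        = Quotient.mk (isIsomorphicSetoid (Fib p b)) Xg ∧ Nonempty (Xg.pt ≅ X.pt) := by
    intro b g X
    obtain ⟨e', g', he, hg⟩ := hp X.pt b (g.hom ≫ eqToHom X.over'.symm)
    exact ⟨⟨e', he⟩, hact b g X ⟨e', he⟩ g' (by simpa using hg),
      ⟨(Groupoid.isoEquivHom _ _).symm g'⟩⟩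
  have finv : ∀ (b : B) (g : Aut b) (q : Quotient (isIsomorphicSetoid (Fib p b))),
      f₀ b ((act b).smul g q) = f₀ b q := by
    intro b g q
    induction q using Quotient.inductionOn with
    | h X =>
      obtain ⟨Xg, h1, h2⟩ := key b g X
      rw [h1]
      exact Quotient.sound h2
  let f : (Σ b : R, Quotient (@MulAction.orbitRel (Aut b.1)
            (Quotient (isIsomorphicSetoid (Fib p b.1))) _ (act b.1)))
          → Quotient (isIsomorphicSetoid E) :=
    fun x => Quotient.lift (f₀ x.1.1)
      (by
        rintro q q' ⟨g, hg⟩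
        rw [← hg]
        exact finv x.1.1 g q') x.2
  have hinj : Function.Injective f := by
    rintro ⟨b₁, q₁⟩ ⟨b₂, q₂⟩ h
    induction q₁ using Quotient.inductionOn with
    | h o₁ =>
    induction q₂ using Quotient.inductionOn with
    | h o₂ =>
    induction o₁ using Quotient.inductionOn with
    | h X₁ =>
    induction o₂ using Quotient.inductionOn with
    | h X₂ =>
    obtain ⟨ψ⟩ : Nonempty (X₁.pt ≅ X₂.pt) := Quotient.exact h
    have hb : b₁ = b₂ := by
      obtain ⟨r, -, hu⟩ := hR b₁.1
      have h1 : b₁.1 = r := hu b₁.1 ⟨b₁.2, ⟨Iso.refl _⟩⟩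
      have h2 : b₂.1 = r := hu b₂.1 ⟨b₂.2,
        ⟨eqToIso X₁.over'.symm ≪≫ p.mapIso ψ ≪≫ eqToIso X₂.over'⟩⟩
      exact Subtype.ext (h1.trans h2.symm)
    subst hb
    congr 1
    apply Quotient.sound
    refine ⟨(Groupoid.isoEquivHom _ _).symm
      (eqToHom X₁.over'.symm ≫ p.map ψ.hom ≫ eqToHom X₂.over'), ?_⟩
    show (act b₁.1).smul _ _ = _
    exact hact b₁.1 _ X₂ X₁ ψ.hom (by simp [Groupoid.isoEquivHom])
  have hsurj : Function.Surjective f := by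
    intro q
    induction q using Quotient.inductionOn with
    | h e =>
      obtain ⟨r, ⟨hrR, ⟨φ⟩⟩, -⟩ := hR (p.obj e)
      obtain ⟨e', g, he, -⟩ := hp e r φ.inv
      exact ⟨⟨⟨r, hrR⟩, Quotient.mk _ (Quotient.mk _ ⟨e', he⟩)⟩,
        Quotient.sound ⟨(Groupoid.isoEquivHom _ _).symm g⟩⟩
  exact ⟨Equiv.ofBijective f ⟨hinj, hsurj⟩, fun b A => rfl⟩
end

section
/- Let G₁ ←P₁− H →P₂→ G₂ be a fibrant span of essentially finite groupoids, ρᵢ : Gᵢ → Vect_ℂ representations, and σ : ρ₁P₁ ⇒ ρ₂P₂ a natural transformation. Fix objects G₁ ∈ G₁, G₂ ∈ G₂ and let R be a set of representatives of the isomorphism classes of the fibre {G₁|H|G₂} of ⟨P₁,P₂⟩ at (G₁,G₂). Then the linear map S = (1/|Aut_{G₂}(G₂)|) · Σ_{H ∈ R} (1/|Aut_{{G₁|H|G₂}}(H)|) · σ_H : ρ₁(G₁) → ρ₂(G₂) takes values in the invariant subspace ρ₂(G₂)^{Aut_{G₂}(G₂)}. -/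
open CategoryTheory

set_option synthInstance.maxHeartbeats 1000000

universe v u

variable {𝒢 G₁ G₂ : Type u} [Groupoid 𝒢] [Groupoid G₁] [Groupoid G₂]

/-- A span of groupoids `G₁ ← 𝒢 → G₂` is fibrant if the induced functor
`⟨P₁,P₂⟩ : 𝒢 → G₁ × G₂` is a fibration of groupoids. -/
def IsFibrantSpan (P₁ : 𝒢 ⥤ G₁) (P₂ : 𝒢 ⥤ G₂) : Prop :=
  ∀ (H : 𝒢) (g₁ : G₁) (g₂ : G₂) (u₁ : g₁ ⟶ P₁.obj H) (u₂ : g₂ ⟶ P₂.obj H),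
    ∃ (H' : 𝒢) (f : H' ⟶ H) (e₁ : P₁.obj H' = g₁) (e₂ : P₂.obj H' = g₂),
      P₁.map f = eqToHom e₁ ≫ u₁ ∧ P₂.map f = eqToHom e₂ ≫ u₂

/-- A groupoid is essentially finite if it is equivalent to a finite groupoid; equivalently,
it has finitely many isomorphism classes of objects and all Hom-sets are finite. -/
def EssentiallyFinite (C : Type*) [Category C] : Prop :=
  Finite (Quotient (isIsomorphicSetoid C)) ∧ ∀ X Y : C, Finite (X ⟶ Y)

/-- The fibre `{G₁|𝒢|G₂}` of a span of groupoids at a pair of objects `(g₁, g₂)`. -/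
structure SpanFib (P₁ : 𝒢 ⥤ G₁) (P₂ : 𝒢 ⥤ G₂) (g₁ : G₁) (g₂ : G₂) where
  pt : 𝒢
  over₁ : P₁.obj pt = g₁
  over₂ : P₂.obj pt = g₂

/-- The fibre of a span is a groupoid, with morphisms the morphisms of `𝒢` lying over the
identities of `g₁` and `g₂`. -/
instance spanFibGroupoid (P₁ : 𝒢 ⥤ G₁) (P₂ : 𝒢 ⥤ G₂) (g₁ : G₁) (g₂ : G₂) :
    Groupoid (SpanFib P₁ P₂ g₁ g₂) where
  Hom a a' := {f : a.pt ⟶ a'.pt // P₁.map f = eqToHom (a.over₁.trans a'.over₁.symm)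
      ∧ P₂.map f = eqToHom (a.over₂.trans a'.over₂.symm)}
  id a := ⟨𝟙 a.pt, by simp⟩
  comp f g := ⟨f.1 ≫ g.1, by
    constructor
    · rw [Functor.map_comp, f.2.1, g.2.1, eqToHom_trans]
    · rw [Functor.map_comp, f.2.2, g.2.2, eqToHom_trans]⟩
  id_comp f := Subtype.ext (Category.id_comp f.1)
  comp_id f := Subtype.ext (Category.comp_id f.1)
  assoc f g h := Subtype.ext (Category.assoc f.1 g.1 h.1)
  inv f := ⟨Groupoid.inv f.1, by
    constructor
    · rw [Groupoid.inv_eq_inv, Functor.map_inv]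
      exact IsIso.inv_eq_of_hom_inv_id (by rw [f.2.1, eqToHom_trans, eqToHom_refl])
    · rw [Groupoid.inv_eq_inv, Functor.map_inv]
      exact IsIso.inv_eq_of_hom_inv_id (by rw [f.2.2, eqToHom_trans, eqToHom_refl])⟩
  inv_comp f := Subtype.ext (Groupoid.inv_comp f.1)
  comp_inv f := Subtype.ext (Groupoid.comp_inv f.1)

namespace SpanFibAux

variable {P₁ : 𝒢 ⥤ G₁} {P₂ : 𝒢 ⥤ G₂} {g₁ : G₁} {g₂ : G₂}

/-- `f` lies over `(𝟙 g₁, u)`. -/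
def OverHom (u : g₂ ⟶ g₂) (A B : SpanFib P₁ P₂ g₁ g₂) (f : A.pt ⟶ B.pt) : Prop :=
  P₁.map f = eqToHom (A.over₁.trans B.over₁.symm) ∧
  P₂.map f = eqToHom A.over₂ ≫ u ≫ eqToHom B.over₂.symm

lemma overHom_comp {u u' : g₂ ⟶ g₂} {A B C : SpanFib P₁ P₂ g₁ g₂}
    {f : A.pt ⟶ B.pt} {f' : B.pt ⟶ C.pt}
    (h : OverHom u A B f) (h' : OverHom u' B C f') :
    OverHom (u ≫ u') A C (f ≫ f') := by
  constructor
  · rw [Functor.map_comp, h.1, h'.1, eqToHom_trans]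
  · rw [Functor.map_comp, h.2, h'.2]
    simp

lemma overHom_inv {u : g₂ ⟶ g₂} {A B : SpanFib P₁ P₂ g₁ g₂} {f : A.pt ⟶ B.pt}
    (h : OverHom u A B f) : OverHom (inv u) B A (Groupoid.inv f) := by
  constructor
  · rw [Groupoid.inv_eq_inv, Functor.map_inv]
    exact IsIso.inv_eq_of_hom_inv_id (by rw [h.1, eqToHom_trans, eqToHom_refl])
  · rw [Groupoid.inv_eq_inv, Functor.map_inv]
    refine IsIso.inv_eq_of_hom_inv_id ?_
    rw [h.2]
    simp

/-- Fibre morphism from an `OverHom` over the identity. -/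
def homOfOver {A B : SpanFib P₁ P₂ g₁ g₂} {f : A.pt ⟶ B.pt}
    (h : OverHom (𝟙 g₂) A B f) : A ⟶ B :=
  ⟨f, h.1, by rw [h.2]; simp⟩

lemma overHom_of_hom {A B : SpanFib P₁ P₂ g₁ g₂} (m : A ⟶ B) :
    OverHom (𝟙 g₂) A B m.1 :=
  ⟨m.2.1, by rw [m.2.2]; simp⟩

lemma exists_lift (hfib : IsFibrantSpan P₁ P₂) (u : g₂ ⟶ g₂) (B : SpanFib P₁ P₂ g₁ g₂) :
    ∃ (A : SpanFib P₁ P₂ g₁ g₂) (f : A.pt ⟶ B.pt), OverHom u A B f := by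
  obtain ⟨H', f, e₁, e₂, h₁, h₂⟩ :=
    hfib B.pt g₁ g₂ (eqToHom B.over₁.symm) (u ≫ eqToHom B.over₂.symm)
  exact ⟨⟨H', e₁, e₂⟩, f, by rw [h₁, eqToHom_trans], by rw [h₂]⟩

lemma iso_of_over {u : g₂ ⟶ g₂} {A A' B : SpanFib P₁ P₂ g₁ g₂}
    {f : A.pt ⟶ B.pt} {f' : A'.pt ⟶ B.pt}
    (h : OverHom u A B f) (h' : OverHom u A' B f') : Nonempty (A ≅ A') := by
  have hc := overHom_comp h (overHom_inv h')
  rw [IsIso.hom_inv_id] at hc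
  exact ⟨asIso (homOfOver hc)⟩

lemma card_aut_eq {u : g₂ ⟶ g₂} {A B : SpanFib P₁ P₂ g₁ g₂} {f : A.pt ⟶ B.pt}
    (h : OverHom u A B f) : Nat.card (Aut A) = Nat.card (Aut B) := by
  have e1 : Aut A ≃ (A ⟶ A) := (Groupoid.isoEquivHom A A)
  have e2 : Aut B ≃ (B ⟶ B) := (Groupoid.isoEquivHom B B)
  have e3 : (A ⟶ A) ≃ (B ⟶ B) := by
    refine ⟨fun a => homOfOver (f := Groupoid.inv f ≫ a.1 ≫ f) ?_,
            fun b => homOfOver (f := f ≫ b.1 ≫ Groupoid.inv f) ?_, ?_, ?_⟩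
    · have := overHom_comp (overHom_inv h) (overHom_comp (overHom_of_hom a) h)
      simpa using this
    · have := overHom_comp h (overHom_comp (overHom_of_hom b) (overHom_inv h))
      simpa using this
    · intro a
      apply Subtype.ext
      simp [homOfOver]
    · intro b
      apply Subtype.ext
      simp [homOfOver]
  exact Nat.card_congr (e1.trans (e3.trans e2.symm))

variable {ρ₁ : G₁ ⥤ ModuleCat.{v} ℂ} {ρ₂ : G₂ ⥤ ModuleCat.{v} ℂ}
  (σ : P₁ ⋙ ρ₁ ⟶ P₂ ⋙ ρ₂)

/-- The component of `σ` at a fibre object, as a map `ρ₁ g₁ ⟶ ρ₂ g₂`. -/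
def cmap (H : SpanFib P₁ P₂ g₁ g₂) : ρ₁.obj g₁ ⟶ ρ₂.obj g₂ :=
  eqToHom (congrArg ρ₁.obj H.over₁).symm ≫ σ.app H.pt ≫ eqToHom (congrArg ρ₂.obj H.over₂)

lemma cmap_over {u : g₂ ⟶ g₂} {A B : SpanFib P₁ P₂ g₁ g₂} {f : A.pt ⟶ B.pt}
    (h : OverHom u A B f) : cmap σ A ≫ ρ₂.map u = cmap σ B := by
  have nat := σ.naturality f
  simp only [Functor.comp_map, h.1, h.2, Functor.map_comp, eqToHom_map] at nat
  simp only [cmap, Category.assoc]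
  rw [← cancel_mono (eqToHom (congrArg ρ₂.obj B.over₂).symm)]
  simp only [Category.assoc, eqToHom_trans, eqToHom_refl, Category.comp_id]
  rw [← nat]
  simp

lemma cmap_eq_of_iso {A B : SpanFib P₁ P₂ g₁ g₂} (φ : A ≅ B) : cmap σ A = cmap σ B := by
  have := cmap_over σ (overHom_of_hom φ.hom)
  simpa using this

lemma card_aut_eq_of_iso {A B : SpanFib P₁ P₂ g₁ g₂} (φ : A ≅ B) :
    Nat.card (Aut A) = Nat.card (Aut B) :=
  card_aut_eq (overHom_of_hom φ.hom)

end SpanFibAux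

open SpanFibAux in
/-- For a fibrant span of essentially finite groupoids, representations `ρᵢ : Gᵢ → Vect_ℂ`,
a natural transformation `σ : ρ₁P₁ ⇒ ρ₂P₂`, objects `g₁ ∈ G₁`, `g₂ ∈ G₂` and a set `R` of
representatives of the isomorphism classes of the fibre `{g₁|𝒢|g₂}`, the linear map
`S = (1/|Aut(g₂)|) Σ_{H ∈ R} (1/|Aut_{fib}(H)|) σ_H : ρ₁(g₁) → ρ₂(g₂)` takes values in the
invariant subspace `ρ₂(g₂)^{Aut(g₂)}`, i.e. `ρ₂(g) ∘ S = S` for every `g ∈ Aut(g₂)`. -/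
theorem averaged_component_invariant
    (P₁ : 𝒢 ⥤ G₁) (P₂ : 𝒢 ⥤ G₂) (hfib : IsFibrantSpan P₁ P₂)
    (h𝒢 : EssentiallyFinite 𝒢) (hG₁ : EssentiallyFinite G₁) (hG₂ : EssentiallyFinite G₂)
    (ρ₁ : G₁ ⥤ ModuleCat.{v} ℂ) (ρ₂ : G₂ ⥤ ModuleCat.{v} ℂ)
    (σ : P₁ ⋙ ρ₁ ⟶ P₂ ⋙ ρ₂)
    (g₁ : G₁) (g₂ : G₂)
    (R : Finset (SpanFib P₁ P₂ g₁ g₂))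
    (hR : ∀ H : SpanFib P₁ P₂ g₁ g₂, ∃! r : SpanFib P₁ P₂ g₁ g₂, r ∈ R ∧ Nonempty (H ≅ r)) :
    ∀ g : Aut g₂,
      ((Nat.card (Aut g₂) : ℂ)⁻¹ • ∑ H ∈ R, (Nat.card (Aut H) : ℂ)⁻¹ •
          (eqToHom (congrArg ρ₁.obj H.over₁).symm ≫ σ.app H.pt
            ≫ eqToHom (congrArg ρ₂.obj H.over₂))) ≫ ρ₂.map g.hom
        = (Nat.card (Aut g₂) : ℂ)⁻¹ • ∑ H ∈ R, (Nat.card (Aut H) : ℂ)⁻¹ •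
            (eqToHom (congrArg ρ₁.obj H.over₁).symm ≫ σ.app H.pt
              ≫ eqToHom (congrArg ρ₂.obj H.over₂)) := by
  intro g
  -- choose lifts and representatives
  choose L Lf hL using exists_lift (g₁ := g₁) (g₂ := g₂) hfib
  choose rep hrep huniq using hR
  have rep_eq : ∀ A H : SpanFib P₁ P₂ g₁ g₂, H ∈ R → Nonempty (A ≅ H) → rep A = H := by
    intro A H hH hiso
    exact (huniq A H ⟨hH, hiso⟩).symm
  -- the key permutation of representatives
  set φf : SpanFib P₁ P₂ g₁ g₂ → SpanFib P₁ P₂ g₁ g₂ := fun H => rep (L g.inv H) with hφf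
  set ψf : SpanFib P₁ P₂ g₁ g₂ → SpanFib P₁ P₂ g₁ g₂ := fun H => rep (L g.hom H) with hψf
  have lift_congr : ∀ (u : g₂ ⟶ g₂) (A B : SpanFib P₁ P₂ g₁ g₂),
      Nonempty (A ≅ B) → Nonempty (L u A ≅ L u B) := by
    intro u A B ⟨e⟩
    have h1 : OverHom (u ≫ 𝟙 g₂) (L u A) B (Lf u A ≫ e.hom.1) :=
      overHom_comp (hL u A) (overHom_of_hom e.hom)
    rw [Category.comp_id] at h1
    exact iso_of_over h1 (hL u B)
  have lift_cancel : ∀ (u u' : g₂ ⟶ g₂), u' ≫ u = 𝟙 g₂ →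
      ∀ H : SpanFib P₁ P₂ g₁ g₂, Nonempty (L u' (L u H) ≅ H) := by
    intro u u' huu H
    have h1 : OverHom (u' ≫ u) (L u' (L u H)) H (Lf u' (L u H) ≫ Lf u H) :=
      overHom_comp (hL u' (L u H)) (hL u H)
    rw [huu] at h1
    exact ⟨asIso (homOfOver h1)⟩
  have hrepiso : ∀ A : SpanFib P₁ P₂ g₁ g₂, Nonempty (A ≅ rep A) := fun A => (hrep A).2
  have hrepmem : ∀ A : SpanFib P₁ P₂ g₁ g₂, rep A ∈ R := fun A => (hrep A).1
  have iso_trans : ∀ {A B C : SpanFib P₁ P₂ g₁ g₂},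
      Nonempty (A ≅ B) → Nonempty (B ≅ C) → Nonempty (A ≅ C) :=
    fun ⟨e⟩ ⟨e'⟩ => ⟨e ≪≫ e'⟩
  have iso_symm : ∀ {A B : SpanFib P₁ P₂ g₁ g₂},
      Nonempty (A ≅ B) → Nonempty (B ≅ A) := fun ⟨e⟩ => ⟨e.symm⟩
  -- the two maps are mutually inverse on R
  have hinv₁ : ∀ H ∈ R, ψf (φf H) = H := by
    intro H hH
    refine rep_eq _ _ hH ?_
    refine iso_trans (lift_congr g.hom _ _ (iso_symm (hrepiso (L g.inv H)))) ?_
    exact lift_cancel g.inv g.hom g.hom_inv_id H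
  have hinv₂ : ∀ H ∈ R, φf (ψf H) = H := by
    intro H hH
    refine rep_eq _ _ hH ?_
    refine iso_trans (lift_congr g.inv _ _ (iso_symm (hrepiso (L g.hom H)))) ?_
    exact lift_cancel g.hom g.inv g.inv_hom_id H
  -- cmap and Aut-card behaviour under φf
  have hc : ∀ H : SpanFib P₁ P₂ g₁ g₂,
      cmap σ H ≫ ρ₂.map g.hom = cmap σ (φf H) := by
    intro H
    have h1 : cmap σ (L g.inv H) ≫ ρ₂.map g.inv = cmap σ H := cmap_over σ (hL g.inv H)
    have h2 : cmap σ (L g.inv H) = cmap σ (φf H) := cmap_eq_of_iso σ (hrepiso _).some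
    rw [← h1, Category.assoc, ← Functor.map_comp, g.inv_hom_id, CategoryTheory.Functor.map_id,
      Category.comp_id, h2]
  have hcard : ∀ H : SpanFib P₁ P₂ g₁ g₂,
      Nat.card (Aut (φf H)) = Nat.card (Aut H) := by
    intro H
    rw [← card_aut_eq_of_iso (hrepiso (L g.inv H)).some]
    exact card_aut_eq (hL g.inv H)
  -- now compute
  rw [Linear.smul_comp, Preadditive.sum_comp]
  congr 1
  simp only [Linear.smul_comp]
  have : ∀ H : SpanFib P₁ P₂ g₁ g₂,
      (eqToHom (congrArg ρ₁.obj H.over₁).symm ≫ σ.app H.pt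
        ≫ eqToHom (congrArg ρ₂.obj H.over₂)) = cmap σ H := fun _ => rfl
  simp only [this]
  refine Finset.sum_nbij' φf ψf (fun H _ => hrepmem _) (fun H _ => hrepmem _)
    hinv₁ hinv₂ ?_
  intro H _
  rw [hc H, hcard H]
end

section
/- Let G be a finite group acting on a finite set M. Then the category of functors M⫽G → Vect_ℂ (representations of the action groupoid) is equivalent to the category of finite-dimensional modules over the smash product algebra ℂ[G] ⋉ ℂ^M, whose multiplication is (g ⊗ δ_m)·(h ⊗ δ_n) = δ_m(h ▷ n) gh ⊗ δ_n. -/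
open CategoryTheory

set_option linter.unusedSectionVars false

universe u

/-- The action groupoid `M ⫽ G` of a group action: objects are the elements of `M`,
morphisms `m ⟶ m'` are group elements `g` with `g • m = m'`. -/
def ActGrpd (G M : Type u) [Group G] [MulAction G M] : Type u := M

instance (G M : Type u) [Group G] [MulAction G M] : MulAction G (ActGrpd G M) :=
  inferInstanceAs (MulAction G M)

instance actGrpdGroupoid (G M : Type u) [Group G] [MulAction G M] :
    Groupoid (ActGrpd G M) where
  Hom m m' := {g : G // g • m = m'}
  id m := ⟨1, one_smul _ _⟩
  comp f g := ⟨g.1 * f.1, by rw [mul_smul, f.2, g.2]⟩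
  id_comp f := Subtype.ext (mul_one f.1)
  comp_id f := Subtype.ext (one_mul f.1)
  assoc f g h := Subtype.ext (mul_assoc h.1 g.1 f.1).symm
  inv f := ⟨f.1⁻¹, inv_smul_eq_iff.mpr f.2.symm⟩
  inv_comp f := Subtype.ext (mul_inv_cancel f.1)
  comp_inv f := Subtype.ext (inv_mul_cancel f.1)

variable (G M : Type) [Group G] [Fintype G] [Fintype M] [MulAction G M]
  [DecidableEq G] [DecidableEq M]

/-- The underlying vector space of the smash product `ℂ[G] ⋉ ℂ^M`: a basis is given by
the elements `g ⊗ δ_m`, so the underlying space is that of functions `G × M → ℂ`. -/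
def Smash : Type := G × M → ℂ

namespace Smash

instance : AddCommGroup (Smash G M) := inferInstanceAs (AddCommGroup (G × M → ℂ))

/-- The basis element `g ⊗ δ_m` of the smash product. -/
noncomputable def basis (g : G) (m : M) : Smash G M := Pi.single (g, m) 1

/-- The multiplication of the smash product `ℂ[G] ⋉ ℂ^M`, obtained by bilinear extension
of `(g ⊗ δ_m)·(h ⊗ δ_n) = δ_m(h ▷ n) gh ⊗ δ_n`. -/
noncomputable def mul (a b : Smash G M) : Smash G M :=
  fun x => ∑ h : G, a (x.1 * h⁻¹, h • x.2) * b (h, x.2)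

/-- The unit `Σ_m 1 ⊗ δ_m` of the smash product. -/
noncomputable def one : Smash G M := fun x => if x.1 = 1 then 1 else 0

theorem add_apply (a b : Smash G M) (x : G × M) : (a + b) x = a x + b x := rfl

theorem zero_apply (x : G × M) : (0 : Smash G M) x = 0 := rfl

theorem mul_add' (a b c : Smash G M) :
    mul G M a (b + c) = mul G M a b + mul G M a c := by
  funext x
  simp [mul, add_apply, mul_add, Finset.sum_add_distrib]

theorem add_mul' (a b c : Smash G M) :
    mul G M (a + b) c = mul G M a c + mul G M b c := by
  funext x
  simp [mul, add_apply, add_mul, Finset.sum_add_distrib]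

theorem zero_mul' (a : Smash G M) : mul G M 0 a = 0 := by
  funext x
  simp [mul, zero_apply]

theorem mul_zero' (a : Smash G M) : mul G M a 0 = 0 := by
  funext x
  simp [mul, zero_apply]

theorem one_mul' (a : Smash G M) : mul G M (one G M) a = a := by
  funext x
  simp only [mul, one, ite_mul, one_mul, zero_mul, mul_inv_eq_one]
  rw [Finset.sum_ite_eq Finset.univ x.1 (fun h => a (h, x.2))]
  simp

theorem mul_one' (a : Smash G M) : mul G M a (one G M) = a := by
  funext x
  simp only [mul, one, mul_ite, mul_one, mul_zero]
  rw [Finset.sum_ite_eq' Finset.univ (1 : G) (fun h => a (x.1 * h⁻¹, h • x.2))]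
  simp

theorem mul_assoc' (a b c : Smash G M) :
    mul G M (mul G M a b) c = mul G M a (mul G M b c) := by
  funext x
  simp only [mul, Finset.sum_mul, Finset.mul_sum]
  conv_rhs => rw [Finset.sum_comm]
  refine Finset.sum_congr rfl fun h _ => ?_
  refine Fintype.sum_equiv (Equiv.mulRight h) _ _ fun k => ?_
  simp [Equiv.coe_mulRight, mul_smul, mul_inv_rev, mul_inv_cancel_right, mul_assoc]

/-- The smash product algebra `ℂ[G] ⋉ ℂ^M`. -/
noncomputable instance ring : Ring (Smash G M) :=
  { (inferInstance : AddCommGroup (Smash G M)) with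
    mul := mul G M
    one := one G M
    left_distrib := mul_add' G M
    right_distrib := add_mul' G M
    zero_mul := zero_mul' G M
    mul_zero := mul_zero' G M
    one_mul := one_mul' G M
    mul_one := mul_one' G M
    mul_assoc := mul_assoc' G M }

end Smash

section Dev
variable {G M}

lemma Smash.mul_apply (a b : Smash G M) (x : G × M) :
    (a * b) x = ∑ h : G, a (x.1 * h⁻¹, h • x.2) * b (h, x.2) := rfl

lemma Smash.zero_apply' (x : G × M) : (0 : Smash G M) x = 0 := rfl

lemma Smash.basis_mul (g h : G) (m n : M) :
    Smash.basis G M g m * Smash.basis G M h n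
      = if m = h • n then Smash.basis G M (g * h) n else 0 := by
  funext x
  obtain ⟨x1, x2⟩ := x
  rw [Smash.mul_apply]
  rw [Finset.sum_eq_single h]
  · simp only [Smash.basis, Pi.single_apply, Prod.mk.injEq, ite_and,
      apply_ite (f := fun f : Smash G M => f (x1, x2)), Smash.zero_apply']
    by_cases h1 : m = h • n <;> by_cases h2 : x2 = n <;>
      by_cases h3 : x1 = g * h <;>
      simp_all [eq_comm, eq_mul_inv_iff_mul_eq] <;> rfl
  · intro k _ hk
    simp [Smash.basis, Pi.single_apply, Prod.ext_iff, hk]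
  · simp

end Dev
section Dev2
variable {G M}

noncomputable instance : Module ℂ (Smash G M) := inferInstanceAs (Module ℂ (G × M → ℂ))

lemma Smash.smul_apply' (c : ℂ) (a : Smash G M) (x : G × M) : (c • a) x = c * a x := rfl

lemma Smash.smul_mul_assoc' (c : ℂ) (a b : Smash G M) : (c • a) * b = c • (a * b) := by
  funext x
  simp [Smash.mul_apply, Smash.smul_apply', Finset.mul_sum, mul_assoc]

lemma Smash.mul_smul_comm' (c : ℂ) (a b : Smash G M) : a * (c • b) = c • (a * b) := by
  funext x
  simp only [Smash.mul_apply, Smash.smul_apply', Finset.mul_sum]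
  exact Finset.sum_congr rfl fun h _ => by ring

noncomputable instance : Algebra ℂ (Smash G M) :=
  Algebra.ofModule (fun c a b => Smash.smul_mul_assoc' c a b)
    (fun c a b => Smash.mul_smul_comm' c a b)

instance : Module.Finite ℂ (Smash G M) := inferInstanceAs (Module.Finite ℂ (G × M → ℂ))

lemma Smash.sum_apply' {ι : Type*} (s : Finset ι) (f : ι → Smash G M) (x : G × M) :
    (∑ i ∈ s, f i) x = ∑ i ∈ s, f i x :=
  Finset.sum_apply (M := fun _ : G × M => ℂ) x s f

lemma Smash.decompose (a : Smash G M) :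
    a = ∑ p : G × M, a p • Smash.basis G M p.1 p.2 := by
  funext x
  rw [Smash.sum_apply']
  rw [Finset.sum_eq_single x]
  · rw [Smash.smul_apply']; simp [Smash.basis, Smash.smul_apply']
  · intro p _ hp; rw [Smash.smul_apply']; simp [Smash.basis, Smash.smul_apply', Pi.single_apply, hp.symm]
  · simp

lemma Smash.sum_basis_one : ∑ m : M, Smash.basis G M 1 m = (1 : Smash G M) := by
  funext x
  rw [Smash.sum_apply']
  show _ = Smash.one G M x
  rw [Finset.sum_eq_single x.2]
  · simp [Smash.basis, Smash.one, Pi.single_apply, Prod.ext_iff, eq_comm]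
  · intro m _ hm; simp [Smash.basis, Pi.single_apply, Prod.ext_iff, hm.symm]
  · simp

end Dev2
section Dev3
variable {G M}

lemma ActGrpd.map_one_apply (F : ActGrpd G M ⥤ FGModuleCat ℂ) {m : ActGrpd G M}
    (h : (1 : G) • m = m) (x : F.obj m) : F.map (⟨1, h⟩ : m ⟶ m) x = x := by
  have : (⟨1, h⟩ : m ⟶ m) = 𝟙 m := Subtype.ext rfl
  rw [this, F.map_id]
  rfl

lemma ActGrpd.map_map (F : ActGrpd G M ⥤ FGModuleCat ℂ) {m₀ m₁ m₂ : ActGrpd G M}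
    (g h : G) (p₁ : h • m₀ = m₁) (p₂ : g • m₁ = m₂) (p₃ : (g * h) • m₀ = m₂) (x : F.obj m₀) :
    F.map (⟨g, p₂⟩ : m₁ ⟶ m₂) (F.map (⟨h, p₁⟩ : m₀ ⟶ m₁) x)
      = F.map (⟨g * h, p₃⟩ : m₀ ⟶ m₂) x := by
  have h1 : ((⟨h, p₁⟩ : m₀ ⟶ m₁) ≫ (⟨g, p₂⟩ : m₁ ⟶ m₂) : m₀ ⟶ m₂) = ⟨g * h, p₃⟩ := by
    apply Subtype.ext
    rfl
  rw [← h1, F.map_comp]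
  rfl

lemma ActGrpd.map_eval (F : ActGrpd G M ⥤ FGModuleCat ℂ) (v : ∀ m : ActGrpd G M, F.obj m)
    {m₁ m₂ m' : ActGrpd G M} (g₁ g₂ : G) (hg : g₁ = g₂) (h12 : m₁ = m₂)
    (h₁ : g₁ • m₁ = m') (h₂ : g₂ • m₂ = m') :
    F.map (⟨g₁, h₁⟩ : m₁ ⟶ m') (v m₁) = F.map (⟨g₂, h₂⟩ : m₂ ⟶ m') (v m₂) := by
  subst hg; subst h12; rfl

/-- The direct sum `⊕_m ρ(m)` underlying the smash-product module built from a
representation of the action groupoid. -/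
abbrev PiV (F : ActGrpd G M ⥤ FGModuleCat ℂ) : Type := ∀ m : ActGrpd G M, F.obj m

noncomputable def psmul (F : ActGrpd G M ⥤ FGModuleCat ℂ) (a : Smash G M) (v : PiV F) :
    PiV F :=
  fun m' => ∑ g : G, a (g, g⁻¹ • m') •
    (F.map (⟨g, smul_inv_smul g m'⟩ : (g⁻¹ • m' : ActGrpd G M) ⟶ m') (v (g⁻¹ • m')))

lemma psmul_one (F : ActGrpd G M ⥤ FGModuleCat ℂ) (v : PiV F) : psmul F 1 v = v := by
  funext m'
  show ∑ g : G, Smash.one G M (g, g⁻¹ • m') • _ = v m'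
  rw [Finset.sum_eq_single (1 : G)]
  · show (if (1:G) = 1 then (1:ℂ) else 0) • _ = v m'
    rw [if_pos rfl, one_smul]
    exact (ActGrpd.map_eval F v 1 1 rfl (by simp) _ (one_smul _ _)).trans
      (ActGrpd.map_one_apply F _ _)
  · intro g _ hg
    simp [Smash.one, hg]
  · simp

lemma psmul_mul (F : ActGrpd G M ⥤ FGModuleCat ℂ) (a b : Smash G M) (v : PiV F) :
    psmul F (a * b) v = psmul F a (psmul F b v) := by
  funext m'
  simp only [psmul, map_sum, Finset.smul_sum, map_smul, smul_smul, Smash.mul_apply,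
    Finset.sum_smul]
  conv_lhs => rw [Finset.sum_comm]
  conv_rhs => rw [Finset.sum_comm]
  refine Finset.sum_congr rfl fun h _ => ?_
  refine Fintype.sum_equiv (Equiv.mulRight h⁻¹) _ _ fun k => ?_
  simp only [Equiv.coe_mulRight]
  congr 1
  · simp [mul_inv_rev, inv_inv, mul_smul, inv_smul_smul]; exact Or.inl rfl
  · refine Eq.trans ?_ (ActGrpd.map_map F (k * h⁻¹) h (smul_inv_smul h _) (smul_inv_smul _ m')
      (by rw [mul_smul, smul_inv_smul, smul_inv_smul]) _).symm
    exact (ActGrpd.map_eval F v k ((k * h⁻¹) * h) (by group)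
      (by rw [mul_inv_rev, inv_inv, mul_smul, inv_smul_smul]) _ _)

end Dev3
section Dev4
variable {G M}

instance : Fintype (ActGrpd G M) := inferInstanceAs (Fintype M)
instance : DecidableEq (ActGrpd G M) := inferInstanceAs (DecidableEq M)

lemma psmul_add (F : ActGrpd G M ⥤ FGModuleCat ℂ) (a : Smash G M) (v w : PiV F) :
    psmul F a (v + w) = psmul F a v + psmul F a w := by
  funext m'
  simp [psmul, smul_add, Finset.sum_add_distrib]

lemma psmul_zero (F : ActGrpd G M ⥤ FGModuleCat ℂ) (a : Smash G M) :
    psmul F a (0 : PiV F) = 0 := by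
  funext m'
  simp [psmul]

lemma add_psmul (F : ActGrpd G M ⥤ FGModuleCat ℂ) (a b : Smash G M) (v : PiV F) :
    psmul F (a + b) v = psmul F a v + psmul F b v := by
  funext m'
  simp [psmul, Smash.add_apply, add_smul, Finset.sum_add_distrib]

lemma zero_psmul (F : ActGrpd G M ⥤ FGModuleCat ℂ) (v : PiV F) :
    psmul F (0 : Smash G M) v = 0 := by
  funext m'
  simp [psmul, Smash.zero_apply']

noncomputable instance piModule (F : ActGrpd G M ⥤ FGModuleCat ℂ) :
    Module (Smash G M) (PiV F) where
  smul := psmul F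
  one_smul := psmul_one F
  mul_smul := psmul_mul F
  smul_zero := psmul_zero F
  smul_add := psmul_add F
  add_smul a b v := add_psmul F a b v
  zero_smul := zero_psmul F

lemma smash_smul_def (F : ActGrpd G M ⥤ FGModuleCat ℂ) (a : Smash G M) (v : PiV F) :
    a • v = psmul F a v := rfl

instance piTower (F : ActGrpd G M ⥤ FGModuleCat ℂ) :
    IsScalarTower ℂ (Smash G M) (PiV F) := by
  constructor
  intro c a v
  rw [smash_smul_def, smash_smul_def]
  funext m'
  simp only [psmul, Smash.smul_apply', Pi.smul_apply, Finset.smul_sum, mul_smul]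

instance piFinite (F : ActGrpd G M ⥤ FGModuleCat ℂ) :
    Module.Finite (Smash G M) (PiV F) := by
  obtain ⟨s, hs⟩ := (inferInstance : Module.Finite ℂ (PiV F)).fg_top
  refine ⟨⟨s, eq_top_iff.2 ?_⟩⟩
  intro v _
  have hv : v ∈ Submodule.span ℂ (s : Set (PiV F)) := by rw [hs]; trivial
  refine Submodule.span_induction (fun x hx => Submodule.subset_span hx)
    (Submodule.zero_mem _) (fun x y _ _ hx hy => Submodule.add_mem _ hx hy) ?_ hv
  intro c x _ hx
  rw [← algebraMap_smul (Smash G M) c x]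
  exact Submodule.smul_mem _ _ hx

noncomputable def toPi {F F' : ActGrpd G M ⥤ FGModuleCat ℂ} (η : F ⟶ F') :
    PiV F →ₗ[Smash G M] PiV F' where
  toFun v := fun m => η.app m (v m)
  map_add' v w := funext fun m => map_add _ _ _
  map_smul' a v := by
    funext m'
    show η.app m' (psmul F a v m') = psmul F' a (fun m => η.app m (v m)) m'
    simp only [psmul, map_sum, map_smul]
    refine Finset.sum_congr rfl fun g _ => ?_
    congr 1
    exact ConcreteCategory.congr_hom
      (η.naturality (⟨g, smul_inv_smul g m'⟩ : (g⁻¹ • m' : ActGrpd G M) ⟶ m')) (v (g⁻¹ • m'))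

noncomputable def Phi (G M : Type) [Group G] [Fintype G] [Fintype M] [MulAction G M]
    [DecidableEq G] [DecidableEq M] :
    (ActGrpd G M ⥤ FGModuleCat ℂ) ⥤ FGModuleCat (Smash G M) where
  obj F := FGModuleCat.of (Smash G M) (PiV F)
  map η := FGModuleCat.ofHom (toPi η)
  map_id F := rfl
  map_comp η θ := rfl

end Dev4
section Dev5
variable {G M}

lemma basis_apply' (g : G) (m : M) (x : G × M) :
    Smash.basis G M g m x = if x = (g, m) then 1 else 0 := Pi.single_apply _ _ _

lemma psmul_basis_single (F : ActGrpd G M ⥤ FGModuleCat ℂ) (g : G) (m : ActGrpd G M)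
    (x : F.obj m) :
    psmul F (Smash.basis G M g m) (Pi.single m x)
      = Pi.single (g • m : ActGrpd G M)
          (F.map (⟨g, rfl⟩ : m ⟶ (g • m : ActGrpd G M)) x) := by
  funext m''
  show ∑ k : G, Smash.basis G M g m (k, k⁻¹ • m'') • _ = _
  rw [Finset.sum_eq_single g]
  · by_cases h : m'' = (g • m : ActGrpd G M)
    · subst h
      have hsc : Smash.basis G M g m (g, g⁻¹ • (g • m)) = 1 := by
        rw [basis_apply' (M := M) g m, if_pos (by exact Prod.ext rfl (inv_smul_smul g m))]
      rw [hsc, one_smul, Pi.single_eq_same]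
      calc F.map (⟨g, smul_inv_smul g _⟩ : (g⁻¹ • (g • m : ActGrpd G M) : ActGrpd G M) ⟶ _)
            ((Pi.single m x : PiV F) (g⁻¹ • (g • m)))
          = F.map (⟨g, rfl⟩ : m ⟶ (g • m : ActGrpd G M)) ((Pi.single m x : PiV F) m) :=
            ActGrpd.map_eval F (Pi.single m x) g g rfl (inv_smul_smul g m) _ _
        _ = F.map (⟨g, rfl⟩ : m ⟶ (g • m : ActGrpd G M)) x := by rw [Pi.single_eq_same]
    · have hsc : Smash.basis G M g m (g, g⁻¹ • m'') = 0 := by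
        rw [basis_apply' (M := M) g m, if_neg]
        intro hc
        replace hc := Prod.mk.inj hc
        exact h (by rw [← hc.2, smul_inv_smul])
      rw [hsc, zero_smul, Pi.single_eq_of_ne h]
  · intro k _ hk
    have hsc : Smash.basis G M g m (k, k⁻¹ • m'') = 0 := by
      rw [basis_apply' (M := M) g m, if_neg]
      intro hc
      replace hc := Prod.mk.inj hc
      exact hk hc.1
    rw [hsc, zero_smul]
  · simp

lemma psmul_e (F : ActGrpd G M ⥤ FGModuleCat ℂ) (m : ActGrpd G M) (v : PiV F) :
    psmul F (Smash.basis G M 1 m) v = Pi.single m (v m) := by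
  funext m''
  show ∑ k : G, Smash.basis G M 1 m (k, k⁻¹ • m'') • _ = _
  rw [Finset.sum_eq_single 1]
  · by_cases h : m'' = m
    · subst h
      have hsc : Smash.basis G M 1 m'' ((1 : G), (1 : G)⁻¹ • m'') = 1 := by
        rw [basis_apply' (M := M) 1 m'', if_pos (by exact Prod.ext rfl (by simp; rfl))]
      rw [hsc, one_smul, Pi.single_eq_same]
      exact (ActGrpd.map_eval F v 1 1 rfl (by simp) _ (one_smul _ _)).trans
        (ActGrpd.map_one_apply F _ _)
    · have hsc : Smash.basis G M 1 m ((1 : G), (1 : G)⁻¹ • m'') = 0 := by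
        rw [basis_apply' (M := M) 1 m, if_neg]
        intro hc
        replace hc := Prod.mk.inj hc
        exact h (by rw [← hc.2]; simp)
      rw [hsc, zero_smul, Pi.single_eq_of_ne h]
  · intro k _ hk
    have hsc : Smash.basis G M 1 m (k, k⁻¹ • m'') = 0 := by
      rw [basis_apply' (M := M) 1 m, if_neg]
      intro hc
      replace hc := Prod.mk.inj hc
      exact hk hc.1
    rw [hsc, zero_smul]
  · simp

lemma psmul_basis_eval (F : ActGrpd G M ⥤ FGModuleCat ℂ) (g : G) (m : ActGrpd G M)
    (w : PiV F) :
    psmul F (Smash.basis G M g m) w (g • m)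
      = F.map (⟨g, rfl⟩ : m ⟶ (g • m : ActGrpd G M)) (w m) := by
  show ∑ k : G, Smash.basis G M g m (k, k⁻¹ • (g • m)) • _ = _
  rw [Finset.sum_eq_single g]
  · have hsc : Smash.basis G M g m (g, g⁻¹ • (g • m)) = 1 := by
      rw [basis_apply' (M := M) g m, if_pos (by exact Prod.ext rfl (inv_smul_smul g m))]
    rw [hsc, one_smul]
    exact ActGrpd.map_eval F w g g rfl (inv_smul_smul g m) _ _
  · intro k _ hk
    have hsc : Smash.basis G M g m (k, k⁻¹ • (g • m)) = 0 := by
      rw [basis_apply' (M := M) g m, if_neg]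
      intro hc
      replace hc := Prod.mk.inj hc
      exact hk hc.1
    rw [hsc, zero_smul]
  · simp

lemma lin_c_smul {F F' : ActGrpd G M ⥤ FGModuleCat ℂ} (f : PiV F →ₗ[Smash G M] PiV F')
    (c : ℂ) (v : PiV F) : f (c • v) = c • f v := by
  have h1 : c • v = (c • (1 : Smash G M)) • v := by rw [smul_assoc, one_smul]
  have h2 : c • f v = (c • (1 : Smash G M)) • f v := by rw [smul_assoc, one_smul]
  rw [h1, h2, f.map_smul]

instance Phi_faithful : (Phi G M).Faithful := by
  constructor
  intro F F' η η' h
  ext m x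
  have h1 := congrFun (ConcreteCategory.congr_hom h (Pi.single m x)) m
  show (η.app m) x = (η'.app m) x
  have e : (Pi.single m x : PiV F) m = x := by simp
  calc (η.app m) x = toPi η (Pi.single m x) m := by
        show _ = (η.app m) ((Pi.single m x : PiV F) m)
        rw [e]
    _ = toPi η' (Pi.single m x) m := h1
    _ = (η'.app m) x := by
        show (η'.app m) ((Pi.single m x : PiV F) m) = _
        rw [e]

noncomputable def preimNat {F F' : ActGrpd G M ⥤ FGModuleCat ℂ}
    (f : PiV F →ₗ[Smash G M] PiV F') : F ⟶ F' where
  app m := ConcreteCategory.ofHom (X := F.obj m) (Y := F'.obj m)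
    { toFun := fun x => f (Pi.single m x) m
      map_add' := fun x y => by
        show f (Pi.single m (x + y)) m = f (Pi.single m x) m + f (Pi.single m y) m
        rw [Pi.single_add, f.map_add]
        rfl
      map_smul' := fun c x => by
        show f (Pi.single m (c • x)) m = c • f (Pi.single m x) m
        rw [Pi.single_smul, lin_c_smul f]
        rfl }
  naturality := by
    intro m m' φ
    obtain ⟨g, hg⟩ := φ
    subst hg
    apply FGModuleCat.hom_ext
    apply LinearMap.ext
    intro x
    show f (Pi.single ((g • m : ActGrpd G M))
        (F.map (⟨g, rfl⟩ : m ⟶ (g • m : ActGrpd G M)) x)) (g • m)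
      = F'.map (⟨g, rfl⟩ : m ⟶ (g • m : ActGrpd G M)) (f (Pi.single m x) m)
    rw [← psmul_basis_single F g m x]
    rw [show psmul F (Smash.basis G M g m) (Pi.single m x)
          = Smash.basis G M g m • (Pi.single m x : PiV F) from rfl]
    rw [f.map_smul]
    exact psmul_basis_eval F' g m (f (Pi.single m x))

instance Phi_full : (Phi G M).Full := by
  constructor
  intro F F' f
  let f' : PiV F →ₗ[Smash G M] PiV F' := f.hom.hom
  refine ⟨preimNat f', ?_⟩
  apply FGModuleCat.hom_ext
  apply LinearMap.ext
  intro v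
  funext m
  show f' (Pi.single m (v m)) m = f' v m
  rw [← psmul_e F m v]
  rw [show psmul F (Smash.basis G M 1 m) v
        = Smash.basis G M 1 m • v from rfl]
  refine (congrFun (f'.map_smul (Smash.basis G M 1 m) v) m).trans ?_
  show psmul F' (Smash.basis G M 1 m) (f' v) m = f' v m
  rw [psmul_e F' m (f' v), Pi.single_eq_same]

end Dev5
section Dev6
variable {G M}

noncomputable instance wModC (W : FGModuleCat (Smash G M)) : Module ℂ W :=
  Module.compHom W (algebraMap ℂ (Smash G M))

lemma wc_def (W : FGModuleCat (Smash G M)) (c : ℂ) (w : W) :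
    c • w = (algebraMap ℂ (Smash G M) c) • w := rfl

instance wTower (W : FGModuleCat (Smash G M)) : IsScalarTower ℂ (Smash G M) W := by
  constructor
  intro c a w
  rw [wc_def, Algebra.smul_def, mul_smul]

instance wFinite (W : FGModuleCat (Smash G M)) : Module.Finite ℂ W :=
  Module.Finite.trans (Smash G M) W

/-- Left multiplication by an element of the smash product, as a `ℂ`-linear map. -/
noncomputable def smulLin (W : FGModuleCat (Smash G M)) (a : Smash G M) : W →ₗ[ℂ] W where
  toFun w := a • w
  map_add' := smul_add a
  map_smul' c w := by
    show a • (algebraMap ℂ (Smash G M) c) • w = c • (a • w)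
    rw [wc_def, ← mul_smul, ← Algebra.commutes, mul_smul]

/-- The idempotent `1 ⊗ δ_m` acting on a smash-product module. -/
noncomputable def P (W : FGModuleCat (Smash G M)) (m : M) : W →ₗ[ℂ] W :=
  smulLin W (Smash.basis G M 1 m)

lemma range_fix (W : FGModuleCat (Smash G M)) (m : M) (w : W)
    (hw : w ∈ LinearMap.range (P W m)) : Smash.basis G M 1 m • w = w := by
  obtain ⟨y, rfl⟩ := hw
  show Smash.basis G M 1 m • (Smash.basis G M 1 m • y) = Smash.basis G M 1 m • y
  rw [← mul_smul, Smash.basis_mul]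
  simp

lemma basis_smul_mem (W : FGModuleCat (Smash G M)) (g : G) (m m' : M) (h : g • m = m')
    (w : W) : Smash.basis G M g m • w ∈ LinearMap.range (P W m') := by
  refine ⟨Smash.basis G M g m • w, ?_⟩
  show Smash.basis G M 1 m' • (Smash.basis G M g m • w) = _
  rw [← mul_smul, Smash.basis_mul, if_pos (by rw [h]), one_mul]

/-- The functor sending a smash-product module to the corresponding representation of the
action groupoid, on objects given by the images of the idempotents `1 ⊗ δ_m`. -/
noncomputable def Psi (W : FGModuleCat (Smash G M)) : ActGrpd G M ⥤ FGModuleCat ℂ where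
  obj m := FGModuleCat.of ℂ (LinearMap.range (P W m))
  map {m m'} φ := ConcreteCategory.ofHom <|
    LinearMap.codRestrict (LinearMap.range (P W m'))
      ((smulLin W (Smash.basis G M φ.1 m)).comp (Submodule.subtype _))
      (fun x => basis_smul_mem W φ.1 m m' φ.2 (Submodule.subtype _ x))
  map_id m := by
    apply FGModuleCat.hom_ext
    apply LinearMap.ext
    intro x
    apply Subtype.ext
    show Smash.basis G M 1 m • Submodule.subtype (LinearMap.range (P W m)) x
        = Submodule.subtype (LinearMap.range (P W m)) x
    have hx : Submodule.subtype (LinearMap.range (P W m)) x ∈ LinearMap.range (P W m) :=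
      (show ↥(LinearMap.range (P W m)) from x).2
    exact range_fix W m _ hx
  map_comp {m m' m''} φ ψ := by
    apply FGModuleCat.hom_ext
    apply LinearMap.ext
    intro x
    apply Subtype.ext
    show Smash.basis G M (ψ.1 * φ.1) m • Submodule.subtype (LinearMap.range (P W m)) x
        = Smash.basis G M ψ.1 m' • (Smash.basis G M φ.1 m •
            Submodule.subtype (LinearMap.range (P W m)) x)
    rw [← mul_smul, Smash.basis_mul (M := M) ψ.1 φ.1 m' m, if_pos (by exact φ.2.symm)]

/-- Forget a vector in `ρ(m) = e_m W` into `W`. -/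
noncomputable def vW (W : FGModuleCat (Smash G M)) (m : ActGrpd G M)
    (x : ↥((Psi W).obj m)) : W :=
  ((show ↥(LinearMap.range (P W m)) from x) : W)

lemma vW_mem (W : FGModuleCat (Smash G M)) (m : ActGrpd G M) (x : ↥((Psi W).obj m)) :
    vW W m x ∈ LinearMap.range (P W m) :=
  (show ↥(LinearMap.range (P W m)) from x).2

/-- `vW` as a `ℂ`-linear map. -/
noncomputable def vWlin (W : FGModuleCat (Smash G M)) (m : ActGrpd G M) :
    ↥((Psi W).obj m) →ₗ[ℂ] W where
  toFun := vW W m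
  map_add' _ _ := rfl
  map_smul' _ _ := rfl

lemma vW_map (W : FGModuleCat (Smash G M)) {m m' : ActGrpd G M} (φ : m ⟶ m')
    (x : ↥((Psi W).obj m)) :
    vW W m' ((Psi W).map φ x) = Smash.basis G M (φ.1 : G) m • vW W m x := rfl

lemma smash_smul_expand (W : FGModuleCat (Smash G M)) (a : Smash G M) (w : W) (m : M)
    (hw : w ∈ LinearMap.range (P W m)) :
    a • w = ∑ g : G, a (g, m) • (Smash.basis G M g m • w) := by
  calc a • w = ∑ g : G, ∑ n : M, a (g, n) • (Smash.basis G M g n • w) := by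
        conv_lhs => rw [Smash.decompose a]
        rw [Finset.sum_smul, Fintype.sum_prod_type]
        exact Finset.sum_congr rfl fun g _ => Finset.sum_congr rfl fun n _ =>
          smul_assoc _ _ _
    _ = ∑ g : G, a (g, m) • (Smash.basis G M g m • w) := by
        refine Finset.sum_congr rfl fun g _ => ?_
        rw [Finset.sum_eq_single m]
        · intro n _ hn
          have h2 : Smash.basis G M g n • (Smash.basis G M 1 m • w)
              = (Smash.basis G M g n * Smash.basis G M 1 m) • w := (mul_smul _ _ _).symm
          rw [range_fix W m w hw] at h2
          rw [h2, Smash.basis_mul, if_neg (by simpa using hn), zero_smul, smul_zero]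
        · simp

/-- The counit comparison map `⊕_m e_m W → W`. -/
noncomputable def eps (W : FGModuleCat (Smash G M)) : PiV (Psi W) →ₗ[Smash G M] W where
  toFun v := ∑ m : M, vW W m (v m)
  map_add' v w := by
    show ∑ m : M, vW W m ((v + w) m) = _
    have h : ∀ m : M, vW W m ((v + w) m) = vW W m (v m) + vW W m (w m) := fun m => rfl
    simp only [h]
    rw [Finset.sum_add_distrib]
  map_smul' a v := by
    show ∑ m' : M, vW W m' (psmul (Psi W) a v m')
        = a • ∑ m : M, vW W m (v m)
    have lhs : ∀ m' : M, vW W m' (psmul (Psi W) a v m')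
        = ∑ g : G, a (g, g⁻¹ • m') •
            (Smash.basis G M g (g⁻¹ • m') • vW W (g⁻¹ • m') (v (g⁻¹ • m'))) := by
      intro m'
      show vWlin W m' (psmul (Psi W) a v m') = _
      simp only [psmul]; rw [map_sum]
      refine Finset.sum_congr rfl fun g _ => ?_
      rw [map_smul]
      exact congrArg _ (vW_map W _ _)
    have rhs : a • ∑ m : M, vW W m (v m)
        = ∑ g : G, ∑ m : M, a (g, m) • (Smash.basis G M g m • vW W m (v m)) := by
      rw [Finset.smul_sum, Finset.sum_comm]
      refine Finset.sum_congr rfl fun m _ => ?_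
      exact smash_smul_expand W a _ m (vW_mem W m (v m))
    simp only [lhs]
    rw [rhs, Finset.sum_comm]
    refine Finset.sum_congr rfl fun g _ => ?_
    refine Fintype.sum_equiv (MulAction.toPerm g).symm _ _ fun m' => ?_
    rfl

end Dev6
section Dev7
variable {G M}

noncomputable def sigma (W : FGModuleCat (Smash G M)) (w : W) : PiV (Psi W) := fun m =>
  (show ↥((Psi W).obj m) from
    (⟨Smash.basis G M 1 m • w, ⟨w, rfl⟩⟩ : ↥(LinearMap.range (P W m))))

lemma sigma_eps (W : FGModuleCat (Smash G M)) (v : PiV (Psi W)) :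
    sigma W (eps W v) = v := by
  funext m
  apply Subtype.ext
  show Smash.basis G M 1 m • (∑ n : M, vW W n (v n)) = vW W m (v m)
  rw [Finset.smul_sum]
  refine Eq.trans (Fintype.sum_eq_single m fun n hn => ?_)
    (range_fix W m _ (vW_mem W m (v m)))
  have h2 : Smash.basis G M 1 m • (Smash.basis G M 1 n • vW W n (v n))
      = (Smash.basis G M 1 m * Smash.basis G M 1 n) • vW W n (v n) := (mul_smul _ _ _).symm
  rw [range_fix W n _ (vW_mem W n (v n))] at h2
  rw [h2, Smash.basis_mul (M := M) 1 1 m n, if_neg (fun hc => hn (by exact (one_smul G n).symm.trans hc.symm)), zero_smul]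

lemma eps_sigma (W : FGModuleCat (Smash G M)) (w : W) : eps W (sigma W w) = w := by
  show ∑ m : M, Smash.basis G M 1 m • w = w
  rw [← Finset.sum_smul, Smash.sum_basis_one, one_smul]

noncomputable def epsEquiv (W : FGModuleCat (Smash G M)) :
    PiV (Psi W) ≃ₗ[Smash G M] W :=
  LinearEquiv.ofBijective (eps W)
    (Function.bijective_iff_has_inverse.mpr ⟨sigma W, sigma_eps W, eps_sigma W⟩)

instance Phi_essSurj : (Phi G M).EssSurj := by
  constructor
  intro W
  refine ⟨Psi W, ⟨?_⟩⟩
  refine { hom := ConcreteCategory.ofHom (epsEquiv W).toLinearMap,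
           inv := ConcreteCategory.ofHom (epsEquiv W).symm.toLinearMap,
           hom_inv_id := ?_, inv_hom_id := ?_ }
  · apply FGModuleCat.hom_ext
    apply LinearMap.ext
    intro v
    exact (epsEquiv W).symm_apply_apply v
  · apply FGModuleCat.hom_ext
    apply LinearMap.ext
    intro w
    exact (epsEquiv W).apply_symm_apply w

end Dev7

universe v₁

/-- Change of universe for finitely generated modules. -/
noncomputable def fgUnivEquiv (R : Type) [Ring R] : FGModuleCat.{v₁} R ≌ FGModuleCat.{0} R :=
  (FGModuleRepr.embed R).asEquivalence.symm.trans (FGModuleRepr.embed R).asEquivalence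

/-- For a finite group `G` acting on a finite set `M`, the multiplication of the smash
product `ℂ[G] ⋉ ℂ^M` satisfies `(g ⊗ δ_m)·(h ⊗ δ_n) = δ_m(h ▷ n) gh ⊗ δ_n` on basis
elements, and the category of representations of the action groupoid `M ⫽ G` by
finite-dimensional complex vector spaces is equivalent to the category of
finite-dimensional modules over `ℂ[G] ⋉ ℂ^M`. -/
theorem actionGroupoid_representations_equiv_smash_modules :
    (∀ (g h : G) (m n : M),
        Smash.basis G M g m * Smash.basis G M h n
          = if m = h • n then Smash.basis G M (g * h) n else 0) ∧
    Nonempty ((ActGrpd G M ⥤ FGModuleCat ℂ) ≌ FGModuleCat (Smash G M)) := by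
  
  constructor
  · exact fun g h m n => Smash.basis_mul g h m n
  · have : (Phi G M).IsEquivalence := {}
    exact ⟨((fgUnivEquiv ℂ).congrRight.trans (Phi G M).asEquivalence).trans
      (fgUnivEquiv (Smash G M)).symm⟩
end

section
/- Let Q and Q' be graded graphs and f : Q → Q' an insertion, i.e. a degree-preserving graph map inducing isomorphisms from the subgraph generated by each vertex v onto the subgraph generated by f(v). Then the induced functor F : Q → Q' between the free categories generated by Q and Q' is a discrete opfibration: for every morphism q' : y' → z' in Q' and every object y with F(y) = y', there is a unique morphism q in Q with source y and F(q) = q'. -/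
universe u

/-- A (finite-type-free) graph with source and target maps. -/
structure Graph' : Type (u + 1) where
  V : Type u
  E : Type u
  s : E → V
  t : E → V

/-- A graph map: maps on vertices and edges commuting with source and target. -/
structure GraphHom (Q Q' : Graph'.{u}) : Type u where
  vMap : Q.V → Q'.V
  eMap : Q.E → Q'.E
  s_comm : ∀ e : Q.E, Q'.s (eMap e) = vMap (Q.s e)
  t_comm : ∀ e : Q.E, Q'.t (eMap e) = vMap (Q.t e)

/-- Reachability: `Reach Q v w` holds if there is a (possibly empty) path in `Q` from
`v` to `w`.  The vertices reachable from `v` are those of the subgraph generated by `v`. -/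
inductive Reach (Q : Graph'.{u}) : Q.V → Q.V → Prop
  | refl (v : Q.V) : Reach Q v v
  | step {v w : Q.V} (e : Q.E) : Reach Q v w → Q.s e = w → Reach Q v (Q.t e)

/-- A graded graph: a degree function on vertices dropping by one along every edge. -/
def IsGraded (Q : Graph'.{u}) (deg : Q.V → ℕ) : Prop :=
  ∀ e : Q.E, deg (Q.s e) = deg (Q.t e) + 1

/-- An insertion of graded graphs: a degree-preserving graph map that restricts to an
isomorphism from the subgraph generated by each vertex `v` onto the subgraph generated
by `f(v)` (bijectively on both the vertices and the edges of these subgraphs). -/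
def IsInsertion {Q Q' : Graph'.{u}} (degQ : Q.V → ℕ) (degQ' : Q'.V → ℕ)
    (f : GraphHom Q Q') : Prop :=
  (∀ v : Q.V, degQ' (f.vMap v) = degQ v) ∧
  (∀ v : Q.V,
    Set.BijOn f.vMap {w | Reach Q v w} {w' | Reach Q' (f.vMap v) w'} ∧
    Set.BijOn f.eMap {e | Reach Q v (Q.s e)} {e' | Reach Q' (f.vMap v) (Q'.s e')})

/-- The quiver underlying a graph: arrows `a ⟶ b` are the edges with source `a` and
target `b`.  Morphisms of the free category generated by the graph are the paths of this
quiver. -/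
instance graphQuiver (Q : Graph'.{u}) : Quiver Q.V :=
  ⟨fun a b => {e : Q.E // Q.s e = a ∧ Q.t e = b}⟩

/-- The prefunctor induced by a graph map, whose extension to paths is the induced
functor between the free categories generated by the graphs. -/
def graphHomPrefunctor {Q Q' : Graph'.{u}} (f : GraphHom Q Q') : Q.V ⥤q Q'.V where
  obj := f.vMap
  map e := ⟨f.eMap e.1, by rw [f.s_comm, e.2.1], by rw [f.t_comm, e.2.2]⟩

/-- For an insertion `f : Q → Q'` of graded graphs, the induced functor between the free
categories generated by `Q` and `Q'` is a discrete opfibration: every morphism (path)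
`q' : f(y) → z'` of the free category on `Q'` has a unique lift with source `y`. -/
theorem insertion_induces_discrete_opfibration {Q Q' : Graph'.{u}}
    (degQ : Q.V → ℕ) (degQ' : Q'.V → ℕ)
    (hQ : IsGraded Q degQ) (hQ' : IsGraded Q' degQ')
    (f : GraphHom Q Q') (hf : IsInsertion degQ degQ' f) :
    ∀ (y : Q.V) (z' : Q'.V) (q' : Quiver.Path ((graphHomPrefunctor f).obj y) z'),
      ∃! zp : Σ z : Q.V, Quiver.Path y z,
        (⟨(graphHomPrefunctor f).obj zp.1, (graphHomPrefunctor f).mapPath zp.2⟩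
            : Σ w : Q'.V, Quiver.Path ((graphHomPrefunctor f).obj y) w)
          = ⟨z', q'⟩ := by
  classical
  -- Unique edge lifting
  have edge_lift : ∀ (m : Q.V) (e' : Q'.E), Q'.s e' = f.vMap m →
      ∃! e : Q.E, Q.s e = m ∧ f.eMap e = e' := by
    intro m e' hs
    obtain ⟨hv, he⟩ := hf.2 m
    have hmem : e' ∈ {e' | Reach Q' (f.vMap m) (Q'.s e')} := by
      simp only [Set.mem_setOf_eq, hs]; exact Reach.refl _
    obtain ⟨e, hes, hee⟩ := he.surjOn hmem
    have hsy : Q.s e = m :=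
      hv.injOn hes (Reach.refl m) (by rw [← f.s_comm, hee, hs])
    refine ⟨e, ⟨hsy, hee⟩, ?_⟩
    rintro e2 ⟨hs2, he2⟩
    refine he.injOn ?_ ?_ (by rw [he2, hee])
    · show Reach Q m (Q.s e2); rw [hs2]; exact Reach.refl m
    · show Reach Q m (Q.s e); rw [hsy]; exact Reach.refl m
  -- injectivity of sigma-cons
  have sigma_cons_inj : ∀ {V : Type u} [Quiver V] {a b b2 c c2 : V}
      (p : Quiver.Path a b) (e : b ⟶ c) (p2 : Quiver.Path a b2) (e2 : b2 ⟶ c2),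
      (⟨c, p.cons e⟩ : Σ w, Quiver.Path a w) = ⟨c2, p2.cons e2⟩ →
      ((⟨b, p⟩ : Σ w, Quiver.Path a w) = ⟨b2, p2⟩) ∧
      ((⟨(b, c), e⟩ : Σ bc : V × V, bc.1 ⟶ bc.2) = ⟨(b2, c2), e2⟩) := by
    intro V _ a b b2 c c2 p e p2 e2 h
    injection h with h1 h2
    subst h1
    have h3 := eq_of_heq h2
    injection h3 with hb hc hpq hee2
    subst hb
    exact ⟨by rw [eq_of_heq hpq], by rw [eq_of_heq hee2]⟩
  intro y z' q'
  induction q' with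
  | nil =>
    refine ⟨⟨y, Quiver.Path.nil⟩, rfl, ?_⟩
    rintro ⟨z, p⟩ h
    cases p with
    | nil => rfl
    | cons p0 b =>
      have := congrArg (fun s : (Σ w, Quiver.Path ((graphHomPrefunctor f).obj y) w) =>
        s.2.length) h
      simp [Prefunctor.mapPath_cons] at this
  | cons p' a ih =>
    obtain ⟨⟨m, p⟩, hp, hpu⟩ := ih
    injection hp with hm hpp
    subst hm
    have hpe := eq_of_heq hpp
    subst hpe
    obtain ⟨e', hs', ht'⟩ := a
    obtain ⟨e, ⟨hes, hee⟩, heu⟩ := edge_lift m e' hs'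
    have hz : Q'.t e' = f.vMap (Q.t e) := by rw [← hee]; exact f.t_comm e
    rw [hz] at ht'
    subst ht' 
    set ea : m ⟶ Q.t e := (⟨e, hes, rfl⟩ : {ed : Q.E // Q.s ed = m ∧ Q.t ed = Q.t e})
    have ha : (⟨e', hs', ht'⟩ : {ed : Q'.E // Q'.s ed = f.vMap m ∧ Q'.t ed = f.vMap (Q.t e)})
        = (graphHomPrefunctor f).map ea := Subtype.ext hee.symm
    erw [ha]
    refine ⟨⟨Q.t e, p.cons ea⟩, ?_, ?_⟩
    · simp [Prefunctor.mapPath_cons, graphHomPrefunctor]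
    · rintro ⟨z, q⟩ h
      cases q with
      | nil =>
        have := congrArg (fun s : (Σ w, Quiver.Path ((graphHomPrefunctor f).obj y) w) =>
          s.2.length) h
        exact absurd this.symm (Nat.succ_ne_zero _)
      | cons q0 b =>
        simp only [Prefunctor.mapPath_cons] at h
        obtain ⟨hside, harr⟩ := sigma_cons_inj _ _ _ _ h
        have := hpu ⟨_, q0⟩ hside
        injection this with hm0 hq0
        subst hm0
        have hq0' := eq_of_heq hq0
        subst hq0'
        have hval := congrArg (fun s : (Σ bc : Q'.V × Q'.V, bc.1 ⟶ bc.2) => s.2.1) harr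
        have hb1 : f.eMap b.1 = f.eMap e := hval
        have hbe : b.1 = e := heu b.1 ⟨b.2.1, by rw [hb1, hee]⟩
        obtain ⟨eb, hbs, hbt⟩ := b
        simp only at hbe
        subst hbe
        subst hbt
        rfl
end
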